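/- Let $\alpha$ be a unital partial action of a group $G$ on a commutative unital ring $\mathcal{A}$ and let $w \in Z^n(G,\mathcal{A})$ ($n \geq 1$). Then $w$ is globalizable if and only if there exists a function $\widetilde{w} : G^n \to \mathcal{U}(\mathcal{A})$ such that for all $x_1,\dots,x_{n+1} \in G$: (a) $\alpha_{x_1}(1_{x_1^{-1}} \widetilde{w}(x_2,\dots,x_{n+1})) \prod_{i=1}^n \widetilde{w}(x_1,\dots,x_i x_{i+1},\dots,x_{n+1})^{(-1)^i} \widetilde{w}(x_1,\dots,x_n)^{(-1)^{n+1}} = 1_{x_1}$, and (b) $w(x_1,\dots,x_n) = 1_{(x_1,\dots,x_n)} \widetilde{w}(x_1,\dots,x_n)$. -/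

import Mathlib

variable {G : Type*} [Group G]

/-- Ordered product `x₁ ⋯ x_k` of the first `k` entries of a tuple. -/
def pprodG {n : ℕ} (x : Fin n → G) (k : ℕ) : G := ((List.ofFn x).take k).prod

/-- The tuple obtained from `(x₁,…,x_{n+1})` by multiplying the entries in positions
`i, i+1` (0-indexed). -/
def dface {n : ℕ} (i : Fin n) (x : Fin (n + 1) → G) : Fin n → G :=
  fun j => if (j : ℕ) < (i : ℕ) then x j.castSucc
    else if j = i then x i.castSucc * x i.succ
    else x j.succ

/-- A unital partial action of `G` on a commutative unital ring `A` (a unital partial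
`G`-module): each domain `D g = (e g)·A` is generated by a central idempotent `e g`,
`D 1 = A`, and the partial isomorphisms `α g : D g⁻¹ → D g` (restrictions of the globally
defined maps `act g`) satisfy the partial action axioms. -/
structure UPA (G A : Type*) [Group G] [CommRing A] where
  e : G → A
  idem : ∀ g, e g * e g = e g
  e_one : e 1 = 1
  act : G → A → A
  act_one : ∀ a, act 1 a = a
  act_mem : ∀ g a, e g⁻¹ * a = a → e g * act g a = act g a
  act_add : ∀ g a b, e g⁻¹ * a = a → e g⁻¹ * b = b → act g (a + b) = act g a + act g b
  act_mul : ∀ g a b, e g⁻¹ * a = a → e g⁻¹ * b = b → act g (a * b) = act g a * act g b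
  act_e : ∀ g h, act g (e g⁻¹ * e h) = e g * e (g * h)
  act_inv : ∀ g a, e g⁻¹ * a = a → act g⁻¹ (act g a) = a
  act_comp : ∀ g h a, e h⁻¹ * e (h⁻¹ * g⁻¹) * a = a → act g (act h a) = act (g * h) a

variable {A : Type*} [CommRing A]

/-- The idempotent `1_{(x₁,…,xₙ)} = 1_{x₁} 1_{x₁x₂} ⋯ 1_{x₁⋯xₙ}`. -/
def UPA.pe (S : UPA G A) {n : ℕ} (x : Fin n → G) : A :=
  ∏ i : Fin n, S.e (pprodG x ((i : ℕ) + 1))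

/-- `w` is a partial `n`-cochain valued in the ideals `D_{(x₁,…,xₙ)}`. -/
def UPA.IsCochain (S : UPA G A) {n : ℕ} (w : (Fin n → G) → A) : Prop :=
  ∀ x, S.pe x * w x = w x

/-- `w, winv` are mutually inverse partial `n`-cochains (inverses in the unital ideals
`D_{(x₁,…,xₙ)}` with identities `pe x`). -/
def UPA.InvPair (S : UPA G A) {n : ℕ} (w winv : (Fin n → G) → A) : Prop :=
  S.IsCochain w ∧ S.IsCochain winv ∧ ∀ x, w x * winv x = S.pe x

/-- `psel w winv k` is `w` for even `k` and `winv` for odd `k`: it implements the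
exponent `(-1)^k` with inverses taken in the appropriate ideals. -/
def psel {n : ℕ} (w winv : (Fin n → G) → A) (k : ℕ) (y : Fin n → G) : A :=
  if Even k then w y else winv y

/-- The partial coboundary
`(δⁿ w)(x₁,…,x_{n+1}) = α_{x₁}(1_{x₁⁻¹} w(x₂,…,x_{n+1})) ·
∏ᵢ w(x₁,…,xᵢxᵢ₊₁,…,x_{n+1})^{(-1)ᶦ} · w(x₁,…,xₙ)^{(-1)^{n+1}}`,
computed with a chosen ideal-inverse `winv` of `w`. -/
def UPA.pdelta (S : UPA G A) {n : ℕ} (w winv : (Fin n → G) → A)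
    (x : Fin (n + 1) → G) : A :=
  S.act (x 0) (S.e (x 0)⁻¹ * w (Fin.tail x)) *
    (∏ i : Fin n, psel w winv ((i : ℕ) + 1) (dface i x)) *
    psel w winv (n + 1) (Fin.init x)

/-- `w` (with ideal-inverse `winv`) is a partial `n`-cocycle: `δⁿ w = e_{n+1}`. -/
def UPA.IsCocyclePair (S : UPA G A) {n : ℕ} (w winv : (Fin n → G) → A) : Prop :=
  S.InvPair w winv ∧ ∀ x : Fin (n + 1) → G, S.pdelta w winv x = S.pe x

/-- The canonical embedding `φ : A → F(G,A)`, `φ(a)(t) = α_{t⁻¹}(1_t a)`. -/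
def UPA.emb (S : UPA G A) (a : A) : G → A := fun t => S.act t⁻¹ (S.e t * a)

/-- The translation action `β_x(f)(t) = f(x⁻¹ t)` on `F(G,A)`. -/
def tr (x : G) (f : G → A) : G → A := fun t => f (x⁻¹ * t)

/-- The enveloping ring `B = Σ_{g ∈ G} β_g(φ(A)) ⊆ F(G,A)` of the partial action. -/
def UPA.env (S : UPA G A) : NonUnitalSubring (G → A) :=
  NonUnitalSubring.closure {f | ∃ g a, f = tr g (S.emb a)}

/-- `m` is a multiplier of the enveloping ring `B`: it preserves `B`, is additive on `B`,
and satisfies `m(fg) = m(f)g` (in the commutative setting this is a full multiplier). -/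
def UPA.IsMultB (S : UPA G A) (m : (G → A) → (G → A)) : Prop :=
  (∀ f ∈ S.env, m f ∈ S.env) ∧
  (∀ f g, f ∈ S.env → g ∈ S.env → m (f + g) = m f + m g) ∧
  (∀ f g, f ∈ S.env → g ∈ S.env → m (f * g) = m f * g)

/-- `m, m'` are mutually inverse (invertible) multipliers of the enveloping ring `B`. -/
def UPA.InvMultPair (S : UPA G A) (m m' : (G → A) → (G → A)) : Prop :=
  S.IsMultB m ∧ S.IsMultB m' ∧ ∀ f ∈ S.env, m (m' f) = f ∧ m' (m f) = f

/-- The action `β*` of `G` on multipliers of `B`: `β*_x(m) = β_x ∘ m ∘ β_x⁻¹`. -/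
def bstar (x : G) (m : (G → A) → (G → A)) : (G → A) → (G → A) :=
  fun f => tr x (m (tr x⁻¹ f))

/-- `msel u uinv k` is `u` for even `k` and `uinv` for odd `k` (the exponent `(-1)^k`
in the group of invertible multipliers). -/
def msel {n : ℕ} (u uinv : (Fin n → G) → (G → A) → (G → A)) (k : ℕ)
    (y : Fin n → G) : (G → A) → (G → A) :=
  if Even k then u y else uinv y

/-- The (multiplicatively written) classical coboundary of a multiplier-valued cochain:
`(δⁿ u)(x₁,…,x_{n+1}) = β*_{x₁}(u(x₂,…,x_{n+1})) · ∏ᵢ u(x₁,…,xᵢxᵢ₊₁,…)^{(-1)ᶦ} ·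
u(x₁,…,xₙ)^{(-1)^{n+1}}`, the product being composition of multipliers. -/
def mdelta {n : ℕ} (u uinv : (Fin n → G) → (G → A) → (G → A))
    (x : Fin (n + 1) → G) : (G → A) → (G → A) :=
  bstar (x 0) (u (Fin.tail x)) ∘
    (List.ofFn (fun i : Fin n => msel u uinv ((i : ℕ) + 1) (dface i x))).foldr (· ∘ ·) id ∘
    msel u uinv (n + 1) (Fin.init x)

/-- `u` (with pointwise inverse `uinv`) is a classical `n`-cocycle of `G` with values in
the unit group of the multiplier ring of the enveloping ring `B`, for the action `β*`. -/
def UPA.GCocyclePair (S : UPA G A) {n : ℕ}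
    (u uinv : (Fin n → G) → (G → A) → (G → A)) : Prop :=
  (∀ x, S.InvMultPair (u x) (uinv x)) ∧
  ∀ (x : Fin (n + 1) → G), ∀ f ∈ S.env, mdelta u uinv x f = f

/-- `u` is a globalization of the partial `n`-cocycle `w`:
`φ(w(x₁,…,xₙ)) = φ(1_{(x₁,…,xₙ)}) · u(x₁,…,xₙ)`. -/
def UPA.Globalizes (S : UPA G A) {n : ℕ}
    (u : (Fin n → G) → (G → A) → (G → A)) (w : (Fin n → G) → A) : Prop :=
  ∀ x, u x (S.emb (S.pe x)) = S.emb (w x)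


section AUX
namespace UPA
variable (S : UPA G A)

lemma emem (g : G) (c : A) : S.e g⁻¹ * (S.e g⁻¹ * c) = S.e g⁻¹ * c := by
  rw [← mul_assoc, S.idem]

lemma act_e_self (s : G) : S.act s (S.e s⁻¹) = S.e s := by
  have := S.act_e s 1
  simpa [S.e_one, S.idem] using this

/-- `Θ_s` is multiplicative. -/
lemma theta_mul (s : G) (a b : A) :
    S.act s (S.e s⁻¹ * (a * b)) = S.act s (S.e s⁻¹ * a) * S.act s (S.e s⁻¹ * b) := by
  have h : (S.e s⁻¹ * a) * (S.e s⁻¹ * b) = S.e s⁻¹ * (a * b) := by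
    rw [mul_mul_mul_comm, S.idem]
  rw [← h]
  exact S.act_mul s _ _ (S.emem s a) (S.emem s b)

lemma act_act (g : G) (a : A) (h : S.e g * a = a) : S.act g (S.act g⁻¹ a) = a := by
  have := S.act_inv g⁻¹ a (by simpa using h)
  simpa using this

/-- absorb `e k` into an action. -/
lemma e_mul_act (k h : G) (c : A) (hc : S.e h⁻¹ * c = c) :
    S.e k * S.act h c = S.act h (S.e h⁻¹ * S.e (h⁻¹ * k) * c) := by
  have h1 : S.act h⁻¹ (S.e h * S.e k) = S.e h⁻¹ * S.e (h⁻¹ * k) := by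
    have := S.act_e h⁻¹ k; simpa using this
  have h2 : S.act h (S.e h⁻¹ * S.e (h⁻¹ * k) * c)
      = S.act h (S.e h⁻¹ * S.e (h⁻¹ * k)) * S.act h c := by
    refine S.act_mul h _ _ ?_ hc
    calc S.e h⁻¹ * (S.e h⁻¹ * S.e (h⁻¹ * k)) = S.e h⁻¹ * S.e h⁻¹ * S.e (h⁻¹*k) := by ring
    _ = _ := by rw [S.idem]
  have h3 : S.act h (S.e h⁻¹ * S.e (h⁻¹ * k)) = S.e h * S.e k := by
    rw [← h1]
    refine S.act_act h _ ?_
    rw [← mul_assoc, S.idem]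
  rw [h2, h3]
  have := S.act_mem h c hc
  calc S.e k * S.act h c = S.e k * (S.e h * S.act h c) := by rw [this]
  _ = S.e h * S.e k * S.act h c := by ring

lemma act_zero (g : G) : S.act g 0 = 0 := by
  have h := S.act_add g 0 0 (by simp) (by simp)
  simpa using h.symm

lemma act_neg (g : G) (a : A) (ha : S.e g⁻¹ * a = a) : S.act g (-a) = - S.act g a := by
  have h := S.act_add g a (-a) ha (by rw [mul_neg, ha])
  rw [add_neg_cancel, S.act_zero] at h
  exact eq_neg_of_add_eq_zero_right h.symm

end UPA

namespace UPA
variable (S : UPA G A)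

lemma emb_apply (a : A) (t : G) : S.emb a t = S.act t⁻¹ (S.e t * a) := rfl

@[simp] lemma emb_one (a : A) : S.emb a 1 = a := by
  simp [emb_apply, S.e_one, S.act_one]

lemma emb_one_apply (t : G) : S.emb 1 t = S.e t⁻¹ := by
  have := S.act_e t⁻¹ 1
  simpa [emb_apply, S.e_one, S.idem] using this

lemma emb_mul (a b : A) : S.emb a * S.emb b = S.emb (a * b) := by
  funext t
  show S.act t⁻¹ (S.e t * a) * S.act t⁻¹ (S.e t * b) = S.act t⁻¹ (S.e t * (a*b))
  have h1 : S.e t * a = S.e (t⁻¹)⁻¹ * a := by rw [inv_inv]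
  have := S.theta_mul t⁻¹ a b
  rw [inv_inv] at this
  exact this.symm

lemma emb_add (a b : A) : S.emb (a + b) = S.emb a + S.emb b := by
  funext t
  show S.act t⁻¹ (S.e t * (a+b)) = S.act t⁻¹ (S.e t * a) + S.act t⁻¹ (S.e t * b)
  rw [mul_add]
  refine S.act_add t⁻¹ _ _ ?_ ?_ <;>
  · rw [inv_inv, ← mul_assoc, S.idem]

end UPA

namespace UPA
variable (S : UPA G A)

lemma emb_zero : S.emb (0 : A) = 0 := by
  funext t; show S.act t⁻¹ (S.e t * 0) = 0; rw [mul_zero, S.act_zero]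

lemma emb_neg (a : A) : S.emb (-a) = - S.emb a := by
  funext t
  show S.act t⁻¹ (S.e t * (-a)) = -(S.act t⁻¹ (S.e t * a))
  rw [mul_neg]
  exact S.act_neg t⁻¹ _ (by rw [inv_inv, ← mul_assoc, S.idem])

lemma emb_mem (a : A) : S.emb a ∈ S.env := by
  apply NonUnitalSubring.subset_closure
  exact ⟨1, a, by funext t; simp [tr]⟩

lemma tr_emb_mem (g : G) (a : A) : tr g (S.emb a) ∈ S.env :=
  NonUnitalSubring.subset_closure ⟨g, a, rfl⟩

lemma tr_tr (x g : G) (f : G → A) : tr x (tr g f) = tr (x * g) f := by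
  funext t; simp [tr, mul_assoc]

lemma tr_add (x : G) (f h : G → A) : tr x (f + h) = tr x f + tr x h := rfl
lemma tr_mul (x : G) (f h : G → A) : tr x (f * h) = tr x f * tr x h := rfl
lemma tr_neg (x : G) (f : G → A) : tr x (-f) = -(tr x f) := rfl
lemma tr_zero (x : G) : tr x (0 : G → A) = 0 := rfl

lemma env_tr (x : G) {f : G → A} (hf : f ∈ S.env) : tr x f ∈ S.env := by
  induction hf using NonUnitalSubring.closure_induction with
  | mem f hf => obtain ⟨g, a, rfl⟩ := hf; rw [tr_tr]; exact S.tr_emb_mem _ _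
  | zero => rw [tr_zero]; exact zero_mem _
  | add f h _ _ hf hh => rw [tr_add]; exact add_mem hf hh
  | neg f _ hf => rw [tr_neg]; exact neg_mem hf
  | mul f h _ _ hf hh => rw [tr_mul]; exact mul_mem hf hh

/-- key computation: `φ(b) ⋅ β_g(φ(a)) = φ(b ⋅ α_g(1_{g⁻¹} a))`. -/
lemma emb_mul_tr (b : A) (g : G) (a : A) :
    S.emb b * tr g (S.emb a) = S.emb (b * S.act g (S.e g⁻¹ * a)) := by
  funext t
  show S.act t⁻¹ (S.e t * b) * S.emb a (g⁻¹ * t) = S.act t⁻¹ (S.e t * (b * S.act g (S.e g⁻¹ * a)))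
  have e1 : S.emb a (g⁻¹ * t) = S.act ((g⁻¹*t)⁻¹) (S.e (g⁻¹*t) * a) := rfl
  -- step 1: e t * act g (e g⁻¹ * a) = act g (e g⁻¹ * e (g⁻¹ * t) * a)
  have s1 : S.e t * S.act g (S.e g⁻¹ * a) = S.act g (S.e g⁻¹ * S.e (g⁻¹ * t) * (S.e g⁻¹ * a)) :=
    S.e_mul_act t g _ (S.emem g a)
  -- step 2: act t⁻¹ (act g c) = act (t⁻¹ * g) c for suitable c
  have s2 : S.act t⁻¹ (S.act g (S.e g⁻¹ * S.e (g⁻¹ * t) * (S.e g⁻¹ * a)))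
      = S.act (t⁻¹ * g) (S.e g⁻¹ * S.e (g⁻¹ * t) * (S.e g⁻¹ * a)) := by
    refine S.act_comp t⁻¹ g _ ?_
    rw [inv_inv]
    linear_combination (S.e g⁻¹ * S.e (g⁻¹*t) * a) * S.idem g⁻¹ + (S.e g⁻¹ * S.e g⁻¹ * S.e g⁻¹ * a) * S.idem (g⁻¹ * t)
  -- step 3: e t⁻¹ * act (t⁻¹ g) (e (g⁻¹ t) * a) equals the same
  have s3 : S.e t⁻¹ * S.act (t⁻¹ * g) (S.e (g⁻¹*t) * a)
      = S.act (t⁻¹ * g) (S.e g⁻¹ * S.e (g⁻¹ * t) * (S.e g⁻¹ * a)) := by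
    have habs := S.e_mul_act t⁻¹ (t⁻¹ * g) (S.e (g⁻¹*t) * a) ?_
    · rw [habs]
      congr 1
      have h1 : (t⁻¹ * g)⁻¹ = g⁻¹ * t := by group
      rw [h1]
      have h2 : g⁻¹ * t * t⁻¹ = g⁻¹ := by group
      rw [h2]
      linear_combination (-(S.e (g⁻¹*t) * a)) * S.idem g⁻¹ + (S.e g⁻¹ * a) * S.idem (g⁻¹ * t)
    · have h1 : (t⁻¹ * g)⁻¹ = g⁻¹ * t := by group
      rw [h1, ← mul_assoc, S.idem]
  -- assemble
  have lhs1 : S.act t⁻¹ (S.e t * b) * S.emb a (g⁻¹ * t)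
      = S.act t⁻¹ (S.e t * b) * (S.e t⁻¹ * S.act (t⁻¹*g) (S.e (g⁻¹*t) * a)) := by
    rw [e1]
    have h1 : (g⁻¹ * t)⁻¹ = t⁻¹ * g := by group
    rw [h1]
    have habs : S.e t⁻¹ * S.act t⁻¹ (S.e t * b) = S.act t⁻¹ (S.e t * b) := by
      refine S.act_mem t⁻¹ _ ?_
      rw [inv_inv, ← mul_assoc, S.idem]
    calc S.act t⁻¹ (S.e t * b) * S.act (t⁻¹ * g) (S.e (g⁻¹ * t) * a)
        = (S.e t⁻¹ * S.act t⁻¹ (S.e t * b)) * S.act (t⁻¹ * g) (S.e (g⁻¹ * t) * a) := by rw [habs]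
      _ = _ := by ring
  rw [lhs1, s3, ← s2, ← s1]
  -- now: act t⁻¹ (e t * b) * act t⁻¹ (e t * act g (e g⁻¹ a)) = act t⁻¹ (e t * (b * act g (e g⁻¹ a)))
  have := S.theta_mul t⁻¹ b (S.act g (S.e g⁻¹ * a))
  rw [inv_inv] at this
  rw [← this]

/-- value at `1` of a translated generator. -/
lemma tr_emb_one (g : G) (a : A) : tr g (S.emb a) 1 = S.act g (S.e g⁻¹ * a) := by
  show S.emb a (g⁻¹ * 1) = _
  rw [mul_one]
  show S.act (g⁻¹)⁻¹ (S.e g⁻¹ * a) = _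
  rw [inv_inv]

lemma mul_emb {f : G → A} (hf : f ∈ S.env) : ∀ b : A, f * S.emb b = S.emb (f 1 * b) := by
  induction hf using NonUnitalSubring.closure_induction with
  | mem f hf =>
      intro b
      obtain ⟨g, a, rfl⟩ := hf
      rw [mul_comm, S.emb_mul_tr, S.tr_emb_one, mul_comm]
  | zero => intro b; rw [zero_mul]; show (0:G→A) = S.emb ((0:A) * b); rw [zero_mul, S.emb_zero]
  | add f h _ _ hf hh =>
      intro b
      rw [add_mul, hf b, hh b, ← S.emb_add]
      exact congrArg S.emb (by show f 1 * b + h 1 * b = (f 1 + h 1) * b; ring)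
  | neg f _ hf =>
      intro b
      rw [neg_mul, hf b]
      show -S.emb (f 1 * b) = S.emb (-(f 1) * b)
      rw [← S.emb_neg, neg_mul]
  | mul f h _ _ hf hh =>
      intro b
      calc f * h * S.emb b = f * (h * S.emb b) := by ring
        _ = f * S.emb (h 1 * b) := by rw [hh]
        _ = S.emb (f 1 * (h 1 * b)) := by rw [hf]
        _ = _ := congrArg S.emb (by show f 1 * (h 1 * b) = f 1 * h 1 * b; ring)

/-- a multiplier composed with `· * emb 1` is multiplication by its value. -/
lemma mult_eval {m : (G → A) → (G → A)} (hm : S.IsMultB m) {f : G → A} (hf : f ∈ S.env) :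
    m f * S.emb 1 = S.emb (m (S.emb 1) 1 * f 1) := by
  have h1 : f * S.emb 1 = S.emb (f 1) := by rw [S.mul_emb hf 1, mul_one]
  have h2 : m (f * S.emb 1) = m f * S.emb 1 := hm.2.2 f (S.emb 1) hf (S.emb_mem 1)
  have h3 : S.emb 1 * S.emb (f 1) = S.emb (f 1) := by rw [S.emb_mul, one_mul]
  have h4 : m (S.emb 1 * S.emb (f 1)) = m (S.emb 1) * S.emb (f 1) :=
    hm.2.2 _ _ (S.emb_mem 1) (S.emb_mem _)
  have h5 : m (S.emb 1) * S.emb (f 1) = S.emb (m (S.emb 1) 1 * f 1) := by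
    have := S.mul_emb (hm.1 _ (S.emb_mem 1)) (f 1)
    rw [this]
  rw [← h2, h1, ← h3, h4, h5]

lemma mult_eval_one {m : (G → A) → (G → A)} (hm : S.IsMultB m) {f : G → A} (hf : f ∈ S.env) :
    m f 1 = m (S.emb 1) 1 * f 1 := by
  have := congrFun (S.mult_eval hm hf) 1
  simpa using this

/-- chain evaluation through a composite of multipliers. -/
lemma chain_eval (ms : List ((G → A) → (G → A))) (hms : ∀ m ∈ ms, S.IsMultB m) :
    ∀ f ∈ S.env, (ms.foldr (· ∘ ·) id f ∈ S.env) ∧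
      (ms.foldr (· ∘ ·) id f) 1 = (ms.map (fun m => m (S.emb 1) 1)).prod * f 1 := by
  induction ms with
  | nil => intro f hf; exact ⟨hf, by simp⟩
  | cons m ms ih =>
      intro f hf
      have hm := hms m List.mem_cons_self
      have ihs := ih (fun m' hm' => hms m' (List.mem_cons_of_mem _ hm')) f hf
      have happ : (m :: ms).foldr (· ∘ ·) id f = m (ms.foldr (· ∘ ·) id f) := rfl
      constructor
      · rw [happ]; exact hm.1 _ ihs.1
      · rw [happ, S.mult_eval_one hm ihs.1, ihs.2, List.map_cons, List.prod_cons, mul_assoc]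

lemma msel_good {n : ℕ} {u uinv : (Fin n → G) → (G → A) → (G → A)}
    (hgc : ∀ y, S.InvMultPair (u y) (uinv y)) (k : ℕ) (y : Fin n → G) :
    S.IsMultB (msel u uinv k y) := by
  unfold msel; split
  · exact (hgc y).1
  · exact (hgc y).2.1

lemma forward {n : ℕ} (w winv : (Fin (n + 1) → G) → A)
    (u uinv : (Fin (n + 1) → G) → (G → A) → (G → A))
    (hgc : S.GCocyclePair u uinv) (hglob : S.Globalizes u w) :
    ∃ wt wtinv : (Fin (n + 1) → G) → A,
      (∀ x, wt x * wtinv x = 1) ∧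
      (∀ x : Fin (n + 2) → G,
        S.act (x 0) (S.e (x 0)⁻¹ * wt (Fin.tail x)) *
          (∏ i : Fin (n + 1), psel wt wtinv ((i : ℕ) + 1) (dface i x)) *
          psel wt wtinv (n + 2) (Fin.init x) = S.e (x 0)) ∧
      (∀ x, w x = S.pe x * wt x) := by
  set wt : (Fin (n+1) → G) → A := fun x => u x (S.emb 1) 1 with hwt
  set wtinv : (Fin (n+1) → G) → A := fun x => uinv x (S.emb 1) 1 with hwtinv
  refine ⟨wt, wtinv, ?_, ?_, ?_⟩
  · -- units
    intro x
    have hp := hgc.1 x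
    have h1 : u x (uinv x (S.emb 1)) = S.emb 1 := (hp.2.2 _ (S.emb_mem 1)).1
    have h2 := S.mult_eval_one hp.1 (hp.2.1.1 _ (S.emb_mem 1))
    rw [h1] at h2
    simpa using h2.symm
  · -- cocycle condition (a)
    intro x
    have hpsel : ∀ (k : ℕ) (y : Fin (n+1) → G), msel u uinv k y (S.emb 1) 1 = psel wt wtinv k y := by
      intro k y; unfold msel psel; split <;> rfl
    set ms : List ((G → A) → (G → A)) :=
      List.ofFn (fun i : Fin (n+1) => msel u uinv ((i:ℕ)+1) (dface i x)) with hms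
    set f0 : G → A := msel u uinv (n+1+1) (Fin.init x) (S.emb 1) with hf0
    have hf0good := S.msel_good hgc.1 (n+1+1) (Fin.init x)
    have hf0mem : f0 ∈ S.env := hf0good.1 _ (S.emb_mem 1)
    have hf0val : f0 1 = psel wt wtinv (n+2) (Fin.init x) * 1 := by
      rw [hf0, S.mult_eval_one hf0good (S.emb_mem 1), hpsel]
      simp
    have hmsgood : ∀ m ∈ ms, S.IsMultB m := by
      intro m hm
      rw [hms] at hm
      obtain ⟨i, rfl⟩ := List.mem_ofFn.mp hm
      exact S.msel_good hgc.1 _ _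
    have hchain := S.chain_eval ms hmsgood f0 hf0mem
    set g : G → A := ms.foldr (· ∘ ·) id f0 with hg
    have hgmem : g ∈ S.env := hchain.1
    have hgval : g 1 = (∏ i : Fin (n+1), psel wt wtinv ((i:ℕ)+1) (dface i x)) *
        (psel wt wtinv (n+2) (Fin.init x) * 1) := by
      rw [hchain.2, hf0val, hms, List.map_ofFn, List.prod_ofFn]
      congr 1
      refine Finset.prod_congr rfl ?_
      intro i _
      exact hpsel _ _
    -- the cocycle identity applied to emb 1
    have hdelta := hgc.2 x (S.emb 1) (S.emb_mem 1)
    have hdelta' : bstar (x 0) (u (Fin.tail x)) g = S.emb 1 := hdelta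
    set x0 : G := x 0 with hx0
    set m := u (Fin.tail x) with hm
    have hp := (hgc.1 (Fin.tail x)).1
    set h' : G → A := tr x0⁻¹ g with hh'
    have hh'mem : h' ∈ S.env := S.env_tr _ hgmem
    have hh'one : h' 1 = g x0 := by
      show g ((x0⁻¹)⁻¹ * 1) = g x0
      rw [inv_inv, mul_one]
    have hone : m h' x0⁻¹ = 1 := by
      have := congrFun hdelta' 1
      have h2 : bstar x0 m g 1 = m h' (x0⁻¹ * 1) := rfl
      rw [h2, mul_one] at this
      rw [this]
      exact S.emb_one 1
    -- evaluate mult_eval at x0⁻¹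
    have heval : m h' x0⁻¹ * S.emb 1 x0⁻¹ = S.emb (m (S.emb 1) 1 * h' 1) x0⁻¹ :=
      congrFun (S.mult_eval hp hh'mem) x0⁻¹
    have he1 : S.emb 1 x0⁻¹ = S.e x0 := by rw [S.emb_one_apply, inv_inv]
    have hwtv : m (S.emb 1) 1 = wt (Fin.tail x) := rfl
    rw [hone, one_mul, he1, hwtv, hh'one] at heval
    have hembx : S.emb (wt (Fin.tail x) * g x0) x0⁻¹
        = S.act x0 (S.e x0⁻¹ * (wt (Fin.tail x) * g x0)) := by
      show S.act (x0⁻¹)⁻¹ (S.e x0⁻¹ * _) = _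
      rw [inv_inv]
    rw [hembx] at heval
    -- compute g x0
    have hgx0 : g x0 * S.e x0⁻¹ = S.act x0⁻¹ (S.e x0 * g 1) := by
      have := congrFun (S.mul_emb hgmem 1) x0
      rw [mul_one] at this
      have h2 : (g * S.emb 1) x0 = g x0 * S.emb 1 x0 := rfl
      rw [h2, S.emb_one_apply] at this
      rw [this]
      rfl
    have htheta := S.theta_mul x0 (wt (Fin.tail x)) (g x0)
    have hthg : S.act x0 (S.e x0⁻¹ * g x0) = S.e x0 * g 1 := by
      rw [mul_comm (S.e x0⁻¹), hgx0]
      exact S.act_act x0 _ (by rw [← mul_assoc, S.idem])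
    rw [htheta, hthg] at heval
    -- heval : S.e x0 = Θ(wt') * (e x0 * g 1)
    set Th := S.act x0 (S.e x0⁻¹ * wt (Fin.tail x)) with hTh
    have habs : S.e x0 * Th = Th := S.act_mem x0 _ (S.emem x0 _)
    set P := ∏ i : Fin (n+1), psel wt wtinv ((i:ℕ)+1) (dface i x) with hP
    set Q := psel wt wtinv (n+2) (Fin.init x) with hQ
    rw [hgval] at heval
    -- goal : Th * P * Q = S.e x0
    linear_combination (-1 : A) * heval - (P * Q) * habs
  · -- condition (b)
    intro x
    have hp := hgc.1 x
    have h1 := hglob x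
    have h2 := S.mult_eval_one hp.1 (S.emb_mem (S.pe x))
    rw [h1] at h2
    have h3 : S.emb (w x) 1 = w x := S.emb_one (w x)
    have h4 : S.emb (S.pe x) 1 = S.pe x := S.emb_one _
    rw [h3, h4] at h2
    rw [h2, mul_comm]

end UPA

/-- uniform face map: `j < m` is a contraction, `j = m` drops the last entry. -/
def Fface {m : ℕ} (j : Fin (m+1)) (z : Fin (m+1) → G) : Fin m → G :=
  if h : (j : ℕ) < m then dface ⟨j, h⟩ z else Fin.init z

lemma Fface_apply {m : ℕ} (j : Fin (m+1)) (z : Fin (m+1) → G) (k : Fin m) :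
    Fface j z k = if (k : ℕ) < (j : ℕ) then z k.castSucc
      else if (k : ℕ) = (j : ℕ) then z k.castSucc * z k.succ else z k.succ := by
  unfold Fface
  split
  · next h =>
    show dface ⟨j, h⟩ z k = _
    unfold dface
    by_cases h1 : (k : ℕ) < (j : ℕ)
    · simp [h1]
    · simp only [h1, if_false]
      by_cases h2 : (k : ℕ) = (j : ℕ)
      · have : k = ⟨(j : ℕ), h⟩ := by exact Fin.ext h2
        simp [this, h2]
      · have : ¬ (k = ⟨(j : ℕ), h⟩) := fun hc => h2 (by rw [hc])
        simp [this, h2]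
  · next h =>
    have hj : (j : ℕ) = m := by omega
    have hk : (k : ℕ) < (j : ℕ) := by omega
    simp [hk, Fin.init]

lemma Fface_castSucc {m : ℕ} (i : Fin m) (z : Fin (m+1) → G) :
    Fface i.castSucc z = dface i z := by
  unfold Fface
  have h : ((i.castSucc : Fin (m+1)) : ℕ) < m := i.isLt
  rw [dif_pos h]
  congr 1

lemma Fface_last {m : ℕ} (z : Fin (m+1) → G) : Fface (Fin.last m) z = Fin.init z := by
  unfold Fface
  rw [dif_neg (by simp)]

lemma Fface_succ_cons {m : ℕ} (s : G) (z : Fin (m+1) → G) (i : Fin (m+1)) :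
    Fface i.succ (Fin.cons s z) = Fin.cons s (Fface i z) := by
  funext k
  rw [Fface_apply]
  refine Fin.cases ?_ ?_ k
  · have : (0 : ℕ) < ((i.succ : Fin (m+2)) : ℕ) := by simp
    rw [if_pos (by simpa using this)]
    simp
  · intro k'
    have h1 : ((k'.succ : Fin (m+1)) : ℕ) = (k' : ℕ) + 1 := rfl
    have h2 : ((i.succ : Fin (m+2)) : ℕ) = (i : ℕ) + 1 := rfl
    rw [h1, h2]
    have hcs : (Fin.cons s z : Fin (m+2) → G) k'.succ.castSucc = z k'.castSucc := by
      rw [← Fin.succ_castSucc]; simp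
    have hss : (Fin.cons s z : Fin (m+2) → G) k'.succ.succ = z k'.succ := by simp
    rw [hcs, hss]
    have hrhs : (Fin.cons s (Fface i z) : Fin (m+1) → G) k'.succ = Fface i z k' := by simp
    rw [hrhs, Fface_apply]
    by_cases c1 : (k' : ℕ) < (i : ℕ)
    · rw [if_pos (by omega), if_pos c1]
    · rw [if_neg (by omega), if_neg c1]
      by_cases c2 : (k' : ℕ) = (i : ℕ)
      · rw [if_pos (by omega), if_pos c2]
      · rw [if_neg (by omega), if_neg c2]

lemma Fface_zero_cons {m : ℕ} (s r : G) (z : Fin m → G) :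
    Fface (0 : Fin (m+2)) (Fin.cons s (Fin.cons r z)) = Fin.cons (s * r) z := by
  funext k
  rw [Fface_apply]
  refine Fin.cases ?_ ?_ k
  · rw [if_neg (by simp), if_pos (by simp)]
    have h1 : ((0 : Fin (m+1)).castSucc) = (0 : Fin (m+2)) := rfl
    have h2 : ((0 : Fin (m+1)).succ) = (1 : Fin (m+2)) := rfl
    rw [h1, h2]
    show s * (Fin.cons s (Fin.cons r z) : Fin (m+2) → G) 1 = _
    have : (Fin.cons s (Fin.cons r z) : Fin (m+2) → G) 1 = r := by
      have : (1 : Fin (m+2)) = (0 : Fin (m+1)).succ := rfl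
      rw [this, Fin.cons_succ]
      simp
    rw [this]
    simp
  · intro k'
    rw [if_neg (by simp), if_neg (by simp)]
    have hss : (Fin.cons s (Fin.cons r z) : Fin (m+2) → G) k'.succ.succ = z k' := by
      rw [Fin.cons_succ, Fin.cons_succ]
    rw [hss, Fin.cons_succ]

lemma Fface_comm {m : ℕ} (z : Fin (m+2) → G) (a : Fin (m+1)) (b : Fin (m+2))
    (hab : (a : ℕ) < (b : ℕ)) :
    Fface a (Fface b z) =
      Fface ⟨(b : ℕ) - 1, by omega⟩ (Fface ⟨(a : ℕ), by omega⟩ z) := by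
  funext k
  simp only [Fface_apply, Fin.coe_castSucc, Fin.val_succ, Fin.succ_castSucc]
  split_ifs <;> first
    | rfl
    | omega
    | (rw [mul_assoc])
    | (rw [← mul_assoc])

def Phi {M : Type*} [CommGroup M] {N : ℕ} (W : (Fin N → G) → M) (z : Fin (N+1) → G) : M :=
  ∏ i : Fin (N+1), W (Fface i z) ^ ((-1:ℤ)^((i:ℕ)+1))

lemma Fface_comm' {m : ℕ} (z : Fin (m+2) → G) {a b : ℕ} (ha : a < m+1) (hb : b < m+2)
    (hab : a < b) (hb1 : b - 1 < m+1) (ha2 : a < m+2) :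
    Fface (⟨a, ha⟩ : Fin (m+1)) (Fface (⟨b, hb⟩ : Fin (m+2)) z) =
      Fface (⟨b - 1, hb1⟩ : Fin (m+1)) (Fface (⟨a, ha2⟩ : Fin (m+2)) z) :=
  Fface_comm z ⟨a, ha⟩ ⟨b, hb⟩ hab

lemma key {M : Type*} [CommGroup M] {N : ℕ} (W : (Fin N → G) → M) (Z : Fin (N+2) → G) :
    ∏ j : Fin (N+2), Phi W (Fface j Z) ^ ((-1:ℤ)^((j:ℕ))) = 1 := by
  unfold Phi
  have cancel : ∀ (u v : M) (e1 e2 : ℤ), u = v → e1 + e2 = 0 → u ^ e1 * v ^ e2 = 1 := by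
    rintro u v e1 e2 rfl h
    rw [← zpow_add, h, zpow_zero]
  have step1 : ∀ j : Fin (N+2), (∏ i : Fin (N+1), W (Fface i (Fface j Z)) ^ ((-1:ℤ)^((i:ℕ)+1)))
      ^ ((-1:ℤ)^((j:ℕ)))
      = ∏ i : Fin (N+1), W (Fface i (Fface j Z)) ^ ((-1:ℤ)^((i:ℕ)+(j:ℕ)+1)) := by
    intro j
    rw [← Finset.prod_zpow]
    refine Finset.prod_congr rfl ?_
    intro i _
    rw [← zpow_mul, ← pow_add]
    have : (i:ℕ)+1+(j:ℕ) = (i:ℕ)+(j:ℕ)+1 := by omega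
    rw [this]
  simp_rw [step1]
  rw [← Finset.prod_product']
  rw [Finset.univ_product_univ]
  refine Finset.prod_involution
    (fun p _ => if h : (p.2 : ℕ) < (p.1 : ℕ)
      then (⟨(p.2 : ℕ), by omega⟩, ⟨(p.1 : ℕ) - 1, by omega⟩)
      else (⟨(p.2 : ℕ) + 1, by have := p.2.isLt; omega⟩, ⟨(p.1 : ℕ), by omega⟩))
    ?_ ?_ (fun p _ => Finset.mem_univ _) ?_
  · -- products cancel
    rintro ⟨⟨jv, hj⟩, ⟨iv, hi⟩⟩ _
    dsimp only
    by_cases hc : iv < jv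
    · rw [dif_pos hc]
      dsimp only
      refine cancel _ _ _ _ (congrArg W (Fface_comm' Z hi hj hc (by omega) (by omega))) ?_
      have h2 : jv - 1 + iv + 1 = iv + jv := by omega
      rw [h2, pow_succ]
      ring
    · rw [dif_neg hc]
      dsimp only
      refine cancel _ _ _ _ ?_ ?_
      · exact (congrArg W (Fface_comm' Z (a := jv) (b := iv + 1) (by omega) (by omega)
          (by omega) (by omega) (by omega))).symm
      · have h2 : jv + (iv + 1) + 1 = (iv + jv + 1) + 1 := by omega
        rw [h2, pow_succ]
        ring
  · -- g p ≠ p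
    rintro ⟨⟨jv, hj⟩, ⟨iv, hi⟩⟩ _ _
    dsimp only
    by_cases hc : iv < jv
    · rw [dif_pos hc]
      intro h
      rw [Prod.mk.injEq, Fin.mk.injEq, Fin.mk.injEq] at h
      omega
    · rw [dif_neg hc]
      intro h
      rw [Prod.mk.injEq, Fin.mk.injEq, Fin.mk.injEq] at h
      omega
  · -- involution
    rintro ⟨⟨jv, hj⟩, ⟨iv, hi⟩⟩ _
    dsimp only
    by_cases hc : iv < jv
    · rw [dif_pos hc]
      dsimp only
      rw [dif_neg (show ¬ (jv - 1 < iv) by omega)]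
      rw [Prod.mk.injEq, Fin.mk.injEq, Fin.mk.injEq]
      omega
    · rw [dif_neg hc]
      dsimp only
      rw [dif_pos (show jv < iv + 1 by omega)]
      rw [Prod.mk.injEq, Fin.mk.injEq, Fin.mk.injEq]
      omega

namespace UPA
variable (S : UPA G A)

lemma theta_prod (s : G) : ∀ {m : ℕ} (f c : Fin m → A),
    (∀ i, S.act s (S.e s⁻¹ * f i) = S.e s * c i) →
    S.act s (S.e s⁻¹ * ∏ i, f i) = S.e s * ∏ i, c i := by
  intro m
  induction m with
  | zero =>
      intro f c _
      rw [Finset.univ_eq_empty, Finset.prod_empty, Finset.prod_empty, mul_one, mul_one]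
      exact S.act_e_self s
  | succ m ih =>
      intro f c h
      rw [Fin.prod_univ_succ, Fin.prod_univ_succ (f := c), S.theta_mul, h 0,
        ih (fun i => f i.succ) (fun i => c i.succ) (fun i => h i.succ)]
      linear_combination (c 0 * ∏ i : Fin m, c i.succ) * S.idem s

lemma scalar_mem (V : G → A)
    (hV : ∀ g a, (fun t => V t * tr g (S.emb a) t) = tr g (S.emb (V g * a)))
    {f : G → A} (hf : f ∈ S.env) : (fun t => V t * f t) ∈ S.env := by
  induction hf using NonUnitalSubring.closure_induction with
  | mem f hf =>
      obtain ⟨g, a, rfl⟩ := hf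
      rw [hV g a]
      exact S.tr_emb_mem _ _
  | zero =>
      have : (fun t => V t * (0 : G → A) t) = 0 := by funext t; simp
      rw [this]; exact zero_mem _
  | add f h _ _ hf hh =>
      have : (fun t => V t * (f + h) t) = (fun t => V t * f t) + (fun t => V t * h t) := by
        funext t; show V t * (f t + h t) = V t * f t + V t * h t; ring
      rw [this]; exact add_mem hf hh
  | neg f _ hf =>
      have : (fun t => V t * (-f) t) = -(fun t => V t * f t) := by
        funext t; show V t * (- (f t)) = -(V t * f t); ring
      rw [this]; exact neg_mem hf
  | mul f h _ hhm hf hh =>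
      have : (fun t => V t * (f * h) t) = (fun t => V t * f t) * h := by
        funext t; show V t * (f t * h t) = (V t * f t) * h t; ring
      rw [this]; exact mul_mem hf hhm

lemma foldr_scalar : ∀ {m : ℕ} (gs : Fin m → (G → A) → (G → A)) (vs : Fin m → G → A),
    (∀ i F t, gs i F t = vs i t * F t) → ∀ (h : G → A) (t : G),
    ((List.ofFn gs).foldr (· ∘ ·) id h) t = (∏ i : Fin m, vs i t) * h t := by
  intro m
  induction m with
  | zero =>
      intro gs vs _ h t
      show h t = _
      rw [Finset.univ_eq_empty, Finset.prod_empty, one_mul]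
  | succ m ih =>
      intro gs vs hgs h t
      rw [List.ofFn_succ]
      show gs 0 ((List.ofFn fun i => gs i.succ).foldr (· ∘ ·) id h) t = _
      rw [hgs 0, ih (fun i => gs i.succ) (fun i => vs i.succ) (fun i F t => hgs i.succ F t) h t,
        Fin.prod_univ_succ (f := fun i => vs i t), mul_assoc]

end UPA

lemma uval_prod {A : Type*} [CommRing A] {m : ℕ} (f : Fin m → Aˣ) :
    ((∏ i, f i : Aˣ) : A) = ∏ i, ((f i : Aˣ) : A) :=
  map_prod (Units.coeHom A) f Finset.univ

namespace UPA

lemma backward (S : UPA G A) {n : ℕ} (w : (Fin (n + 1) → G) → A)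
    (wt wtinv : (Fin (n + 1) → G) → A)
    (hunit : ∀ x, wt x * wtinv x = 1)
    (ha : ∀ x : Fin (n + 2) → G,
        S.act (x 0) (S.e (x 0)⁻¹ * wt (Fin.tail x)) *
          (∏ i : Fin (n + 1), psel wt wtinv ((i : ℕ) + 1) (dface i x)) *
          psel wt wtinv (n + 2) (Fin.init x) = S.e (x 0))
    (hb : ∀ x, w x = S.pe x * wt x) :
    ∃ u uinv : (Fin (n + 1) → G) → (G → A) → (G → A),
      S.GCocyclePair u uinv ∧ S.Globalizes u w := by
  classical
  -- the unit-valued cochain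
  set W : (Fin (n+1) → G) → Aˣ := fun v =>
    ⟨wt v, wtinv v, hunit v, by rw [mul_comm]; exact hunit v⟩ with hW
  have hWval : ∀ v, ((W v : Aˣ) : A) = wt v := fun v => rfl
  have hpsel : ∀ (k : ℕ) (v : Fin (n+1) → G),
      psel wt wtinv k v = ((W v ^ ((-1:ℤ)^k) : Aˣ) : A) := by
    intro k v
    unfold psel
    by_cases he : Even k
    · rw [if_pos he, Even.neg_one_pow he, zpow_one]
    · rw [if_neg he, Odd.neg_one_pow (Nat.not_even_iff_odd.mp he), zpow_neg_one]
      rfl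
  -- value of Phi as product of psel over all faces
  have hPhiVal : ∀ z : Fin (n+2) → G,
      ((Phi W z : Aˣ) : A) = ∏ i : Fin (n+2), psel wt wtinv ((i:ℕ)+1) (Fface i z) := by
    intro z
    unfold Phi
    refine (map_prod (Units.coeHom A) _ Finset.univ).trans ?_
    exact Finset.prod_congr rfl (fun i _ => (hpsel _ _).symm)
  have hPhiInv : ∀ z : Fin (n+2) → G,
      (((Phi W z)⁻¹ : Aˣ) : A) = ∏ i : Fin (n+2), psel wt wtinv ((i:ℕ)) (Fface i z) := by
    intro z
    unfold Phi
    rw [← Finset.prod_inv_distrib]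
    refine (map_prod (Units.coeHom A) _ Finset.univ).trans ?_
    refine Finset.prod_congr rfl (fun i _ => ?_)
    rw [hpsel]
    show (((W (Fface i z) ^ ((-1:ℤ)^((i:ℕ)+1)))⁻¹ : Aˣ) : A) = ((W (Fface i z) ^ ((-1:ℤ)^(i:ℕ)) : Aˣ) : A)
    rw [← zpow_neg, pow_succ]
    norm_num
  -- the (a)-product in Phi form
  have hprodA : ∀ x : Fin (n+2) → G,
      (∏ i : Fin (n+1), psel wt wtinv ((i:ℕ)+1) (dface i x)) * psel wt wtinv (n+2) (Fin.init x)
        = ((Phi W x : Aˣ) : A) := by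
    intro x
    rw [hPhiVal, Fin.prod_univ_castSucc (f := fun i : Fin (n+2) => psel wt wtinv ((i:ℕ)+1) (Fface i x))]
    congr 1
    · refine Finset.prod_congr rfl (fun i _ => ?_)
      rw [Fface_castSucc]
      rfl
    · rw [Fface_last]
      rfl
  -- B1 : action on wt
  have hB1 : ∀ (s : G) (z : Fin (n+1) → G),
      S.act s (S.e s⁻¹ * wt z) = S.e s * (((Phi W (Fin.cons s z))⁻¹ : Aˣ) : A) := by
    intro s z
    have h := ha (Fin.cons s z)
    rw [Fin.cons_zero, Fin.tail_cons] at h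
    rw [mul_assoc, hprodA (Fin.cons s z)] at h
    calc S.act s (S.e s⁻¹ * wt z)
        = S.act s (S.e s⁻¹ * wt z) * (((Phi W (Fin.cons s z) : Aˣ) : A) * (((Phi W (Fin.cons s z))⁻¹ : Aˣ) : A)) := by
          rw [← Units.val_mul, mul_inv_cancel, Units.val_one, mul_one]
      _ = (S.act s (S.e s⁻¹ * wt z) * ((Phi W (Fin.cons s z) : Aˣ) : A)) * (((Phi W (Fin.cons s z))⁻¹ : Aˣ) : A) := by ring
      _ = S.e s * (((Phi W (Fin.cons s z))⁻¹ : Aˣ) : A) := by rw [h]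
  -- B1inv : action on wtinv
  have hB1inv : ∀ (s : G) (z : Fin (n+1) → G),
      S.act s (S.e s⁻¹ * wtinv z) = S.e s * ((Phi W (Fin.cons s z) : Aˣ) : A) := by
    intro s z
    have hmul := S.theta_mul s (wt z) (wtinv z)
    rw [hunit z, mul_one, S.act_e_self, hB1 s z] at hmul
    set Y := S.act s (S.e s⁻¹ * wtinv z) with hY
    have habs : S.e s * Y = Y := S.act_mem s _ (S.emem s _)
    have h3 : ((Phi W (Fin.cons s z) : Aˣ) : A) * S.e s = S.e s * Y := by
      have hu : ((Phi W (Fin.cons s z) : Aˣ) : A) * (((Phi W (Fin.cons s z))⁻¹ : Aˣ) : A) = 1 := by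
        rw [← Units.val_mul, mul_inv_cancel, Units.val_one]
      linear_combination ((Phi W (Fin.cons s z) : Aˣ) : A) * hmul + (S.e s * Y) * hu
    rw [habs] at h3
    rw [← h3, mul_comm]
  -- B1gen : action on psel
  have hB1gen : ∀ (s : G) (z : Fin (n+1) → G) (k : ℕ),
      S.act s (S.e s⁻¹ * psel wt wtinv k z)
        = S.e s * ((Phi W (Fin.cons s z) ^ ((-1:ℤ)^(k+1)) : Aˣ) : A) := by
    intro s z k
    unfold psel
    by_cases he : Even k
    · rw [if_pos he]
      have : ((-1:ℤ)^(k+1)) = -1 := Odd.neg_one_pow (Even.add_one he)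
      rw [this, zpow_neg_one]
      exact hB1 s z
    · rw [if_neg he]
      have : ((-1:ℤ)^(k+1)) = 1 := Even.neg_one_pow (Odd.add_one (Nat.not_even_iff_odd.mp he))
      rw [this, zpow_one]
      exact hB1inv s z
  -- B2 core from the key cancellation
  have hB2core : ∀ Z : Fin (n+3) → G,
      (∏ i : Fin (n+2), Phi W (Fface i.succ Z) ^ ((-1:ℤ)^((i:ℕ)+1))) = (Phi W (Fface 0 Z))⁻¹ := by
    intro Z
    have hk := key W Z
    rw [Fin.prod_univ_succ] at hk
    simp only [Fin.val_succ, Fin.val_zero, pow_zero, zpow_one] at hk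
    exact (inv_eq_of_mul_eq_one_right hk).symm
  -- B2 : action on the multiplier scalars
  have hB2 : ∀ (y : Fin (n+1) → G) (t s : G),
      S.act s (S.e s⁻¹ * (((Phi W (Fin.cons t⁻¹ y))⁻¹ : Aˣ) : A))
        = S.e s * (((Phi W (Fin.cons (t * s⁻¹)⁻¹ y))⁻¹ : Aˣ) : A) := by
    intro y t s
    have hth := S.theta_prod s
      (fun i : Fin (n+2) => psel wt wtinv ((i:ℕ)) (Fface i (Fin.cons t⁻¹ y)))
      (fun i : Fin (n+2) => ((Phi W (Fin.cons s (Fface i (Fin.cons t⁻¹ y))) ^ ((-1:ℤ)^((i:ℕ)+1)) : Aˣ) : A))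
      (fun i => hB1gen s _ ((i:ℕ)))
    rw [← hPhiInv] at hth
    rw [hth]
    congr 1
    calc (∏ i : Fin (n+2), ((Phi W (Fin.cons s (Fface i (Fin.cons t⁻¹ y))) ^ ((-1:ℤ)^((i:ℕ)+1)) : Aˣ) : A))
        = ((∏ i : Fin (n+2), Phi W (Fface i.succ (Fin.cons s (Fin.cons t⁻¹ y))) ^ ((-1:ℤ)^((i:ℕ)+1)) : Aˣ) : A) := by
          refine Eq.trans ?_ (map_prod (Units.coeHom A) _ Finset.univ).symm
          refine Finset.prod_congr rfl (fun i _ => ?_)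
          rw [Fface_succ_cons]
          rfl
      _ = (((Phi W (Fface 0 (Fin.cons s (Fin.cons t⁻¹ y))))⁻¹ : Aˣ) : A) := by rw [hB2core]
      _ = (((Phi W (Fin.cons (t * s⁻¹)⁻¹ y))⁻¹ : Aˣ) : A) := by
          rw [Fface_zero_cons]
          have hg : (t * s⁻¹)⁻¹ = s * t⁻¹ := by group
          rw [hg]
  -- B2inv
  have hB2inv : ∀ (y : Fin (n+1) → G) (t s : G),
      S.act s (S.e s⁻¹ * ((Phi W (Fin.cons t⁻¹ y) : Aˣ) : A))
        = S.e s * ((Phi W (Fin.cons (t * s⁻¹)⁻¹ y) : Aˣ) : A) := by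
    intro y t s
    have hmul := S.theta_mul s ((((Phi W (Fin.cons t⁻¹ y))⁻¹ : Aˣ) : A)) (((Phi W (Fin.cons t⁻¹ y) : Aˣ) : A))
    have hx : (((Phi W (Fin.cons t⁻¹ y))⁻¹ : Aˣ) : A) * ((Phi W (Fin.cons t⁻¹ y) : Aˣ) : A) = 1 := by
      rw [← Units.val_mul, inv_mul_cancel, Units.val_one]
    rw [hx, mul_one, S.act_e_self, hB2 y t s] at hmul
    set Y := S.act s (S.e s⁻¹ * ((Phi W (Fin.cons t⁻¹ y) : Aˣ) : A)) with hY
    have habs : S.e s * Y = Y := S.act_mem s _ (S.emem s _)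
    have hu2 : (((Phi W (Fin.cons (t*s⁻¹)⁻¹ y))⁻¹ : Aˣ) : A) * ((Phi W (Fin.cons (t*s⁻¹)⁻¹ y) : Aˣ) : A) = 1 := by
      rw [← Units.val_mul, inv_mul_cancel, Units.val_one]
    linear_combination (-(((Phi W (Fin.cons (t*s⁻¹)⁻¹ y) : Aˣ) : A))) * hmul
      - (S.e s * Y) * hu2 - habs
  -- generator coherence for the scalar multipliers
  have theta2 : ∀ (r : G) (a b : A),
      S.act r⁻¹ (S.e r * (a * b)) = S.act r⁻¹ (S.e r * a) * S.act r⁻¹ (S.e r * b) := by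
    intro r a b
    have := S.theta_mul r⁻¹ a b
    rw [inv_inv] at this
    exact this
  have habs2 : ∀ (r : G) (c : A), S.e r⁻¹ * S.act r⁻¹ (S.e r * c) = S.act r⁻¹ (S.e r * c) := by
    intro r c
    refine S.act_mem r⁻¹ _ ?_
    rw [inv_inv, ← mul_assoc, S.idem]
  have hcohV : ∀ (y : Fin (n+1) → G) (g : G) (a : A),
      (fun t => (((Phi W (Fin.cons t⁻¹ y))⁻¹ : Aˣ) : A) * tr g (S.emb a) t)
        = tr g (S.emb ((((Phi W (Fin.cons g⁻¹ y))⁻¹ : Aˣ) : A) * a)) := by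
    intro y g a
    funext t
    show (((Phi W (Fin.cons t⁻¹ y))⁻¹ : Aˣ) : A) * S.act (g⁻¹ * t)⁻¹ (S.e (g⁻¹ * t) * a)
      = S.act (g⁻¹ * t)⁻¹ (S.e (g⁻¹ * t) * ((((Phi W (Fin.cons g⁻¹ y))⁻¹ : Aˣ) : A) * a))
    rw [theta2 (g⁻¹ * t) _ a]
    have h2 := hB2 y g ((g⁻¹ * t)⁻¹)
    rw [inv_inv] at h2
    have hgs : g * (g⁻¹ * t) = t := by group
    rw [hgs] at h2
    rw [h2]
    have hax := habs2 (g⁻¹ * t) a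
    linear_combination (-((((Phi W (Fin.cons t⁻¹ y))⁻¹ : Aˣ) : A))) * hax
  have hcohVi : ∀ (y : Fin (n+1) → G) (g : G) (a : A),
      (fun t => ((Phi W (Fin.cons t⁻¹ y) : Aˣ) : A) * tr g (S.emb a) t)
        = tr g (S.emb (((Phi W (Fin.cons g⁻¹ y) : Aˣ) : A) * a)) := by
    intro y g a
    funext t
    show ((Phi W (Fin.cons t⁻¹ y) : Aˣ) : A) * S.act (g⁻¹ * t)⁻¹ (S.e (g⁻¹ * t) * a)
      = S.act (g⁻¹ * t)⁻¹ (S.e (g⁻¹ * t) * (((Phi W (Fin.cons g⁻¹ y) : Aˣ) : A) * a))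
    rw [theta2 (g⁻¹ * t) _ a]
    have h2 := hB2inv y g ((g⁻¹ * t)⁻¹)
    rw [inv_inv] at h2
    have hgs : g * (g⁻¹ * t) = t := by group
    rw [hgs] at h2
    rw [h2]
    have hax := habs2 (g⁻¹ * t) a
    linear_combination (-(((Phi W (Fin.cons t⁻¹ y) : Aˣ) : A))) * hax
  -- the multipliers
  refine ⟨fun y f t => (((Phi W (Fin.cons t⁻¹ y))⁻¹ : Aˣ) : A) * f t,
          fun y f t => ((Phi W (Fin.cons t⁻¹ y) : Aˣ) : A) * f t, ⟨?_, ?_⟩, ?_⟩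
  · -- InvMultPair
    intro y
    refine ⟨⟨?_, ?_, ?_⟩, ⟨?_, ?_, ?_⟩, ?_⟩
    · intro f hf
      exact S.scalar_mem _ (hcohV y) hf
    · intro f g _ _
      funext t
      show _ * (f t + g t) = _ * f t + _ * g t
      ring
    · intro f g _ _
      funext t
      show _ * (f t * g t) = (_ * f t) * g t
      ring
    · intro f hf
      exact S.scalar_mem _ (hcohVi y) hf
    · intro f g _ _
      funext t
      show _ * (f t + g t) = _ * f t + _ * g t
      ring
    · intro f g _ _
      funext t
      show _ * (f t * g t) = (_ * f t) * g t
      ring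
    · intro f _
      constructor <;> funext t
      · show (((Phi W (Fin.cons t⁻¹ y))⁻¹ : Aˣ) : A) * (((Phi W (Fin.cons t⁻¹ y) : Aˣ) : A) * f t) = f t
        rw [← mul_assoc, ← Units.val_mul, inv_mul_cancel, Units.val_one, one_mul]
      · show ((Phi W (Fin.cons t⁻¹ y) : Aˣ) : A) * ((((Phi W (Fin.cons t⁻¹ y))⁻¹ : Aˣ) : A) * f t) = f t
        rw [← mul_assoc, ← Units.val_mul, mul_inv_cancel, Units.val_one, one_mul]
  · -- the cocycle identity δu = 1
    intro x f _
    funext t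
    set x0 : G := x 0 with hx0
    have hmselval : ∀ (k : ℕ) (y : Fin (n+1) → G) (F : G → A) (r : G),
        msel (fun y f t => (((Phi W (Fin.cons t⁻¹ y))⁻¹ : Aˣ) : A) * f t)
             (fun y f t => ((Phi W (Fin.cons t⁻¹ y) : Aˣ) : A) * f t) k y F r
          = ((Phi W (Fin.cons r⁻¹ y) ^ ((-1:ℤ)^(k+1)) : Aˣ) : A) * F r := by
      intro k y F r
      unfold msel
      by_cases he : Even k
      · rw [if_pos he]
        have : ((-1:ℤ)^(k+1)) = -1 := Odd.neg_one_pow (Even.add_one he)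
        rw [this, zpow_neg_one]
      · rw [if_neg he]
        have : ((-1:ℤ)^(k+1)) = 1 := Even.neg_one_pow (Odd.add_one (Nat.not_even_iff_odd.mp he))
        rw [this, zpow_one]
    simp only [mdelta, Function.comp_apply, bstar, tr]
    rw [UPA.foldr_scalar
      (fun i : Fin (n+1) => msel (fun y f t => (((Phi W (Fin.cons t⁻¹ y))⁻¹ : Aˣ) : A) * f t)
        (fun y f t => ((Phi W (Fin.cons t⁻¹ y) : Aˣ) : A) * f t) ((i:ℕ)+1) (dface i x))
      (fun i r => ((Phi W (Fin.cons r⁻¹ (dface i x)) ^ ((-1:ℤ)^((i:ℕ)+1+1)) : Aˣ) : A))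
      (fun i F r => hmselval ((i:ℕ)+1) (dface i x) F r)]
    rw [hmselval (n+1+1) (Fin.init x) f]
    have hgr : x0⁻¹⁻¹ * (x0⁻¹ * t) = t := by group
    rw [hgr]
    -- the scalar is the value of a unit equal to 1
    set Z : Fin (n+3) → G := Fin.cons t⁻¹ x with hZ
    have e0 : Fin.cons (x0⁻¹ * t)⁻¹ (Fin.tail x) = Fface (0 : Fin (n+3)) Z := by
      have h1 : (x0⁻¹ * t)⁻¹ = t⁻¹ * x0 := by group
      rw [h1]
      have h2 : Fface (0 : Fin (n+3)) (Fin.cons t⁻¹ (Fin.cons x0 (Fin.tail x)))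
          = Fin.cons (t⁻¹ * x0) (Fin.tail x) := Fface_zero_cons _ _ _
      rw [← h2, hZ, hx0, Fin.cons_self_tail]
    have e1 : ∀ i : Fin (n+1), Fin.cons t⁻¹ (dface i x) = Fface (i.castSucc.succ) Z := by
      intro i
      rw [← Fface_castSucc i x, ← Fface_succ_cons, hZ]
    have e2 : Fin.cons t⁻¹ (Fin.init x) = Fface (Fin.last (n+2)) Z := by
      rw [← Fface_last x, ← Fface_succ_cons, Fin.succ_last, hZ]
    have hterm : ∀ (q : Aˣ) (k : ℕ), q ^ ((-1:ℤ)^(k+1)) = (q ^ ((-1:ℤ)^k))⁻¹ := by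
      intro q k
      rw [pow_succ, zpow_mul, zpow_neg_one]
    have hunit1 : (Phi W (Fin.cons (x0⁻¹ * t)⁻¹ (Fin.tail x)))⁻¹ *
        ((∏ i : Fin (n+1), Phi W (Fin.cons t⁻¹ (dface i x)) ^ ((-1:ℤ)^((i:ℕ)+1+1))) *
          Phi W (Fin.cons t⁻¹ (Fin.init x)) ^ ((-1:ℤ)^(n+1+1+1))) = 1 := by
      rw [e0, e2]
      have e1' : (∏ i : Fin (n+1), Phi W (Fin.cons t⁻¹ (dface i x)) ^ ((-1:ℤ)^((i:ℕ)+1+1)))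
          = ∏ i : Fin (n+1), (Phi W (Fface (i.castSucc.succ) Z) ^ ((-1:ℤ)^((i:ℕ)+1)))⁻¹ := by
        refine Finset.prod_congr rfl (fun i _ => ?_)
        rw [e1 i, hterm _ ((i:ℕ)+1)]
      rw [e1', hterm _ (n+1+1), Finset.prod_inv_distrib, ← mul_inv, ← mul_inv]
      have hk := key W Z
      rw [Fin.prod_univ_succ] at hk
      simp only [Fin.val_succ, Fin.val_zero, pow_zero, zpow_one] at hk
      rw [Fin.prod_univ_castSucc
        (f := fun i : Fin (n+2) => Phi W (Fface i.succ Z) ^ ((-1:ℤ)^((i:ℕ)+1)))] at hk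
      simp only [Fin.coe_castSucc, Fin.val_last] at hk
      rw [Fin.succ_last] at hk
      rw [hk, inv_one]
    have hvs : (∏ i : Fin (n+1),
          (fun (i : Fin (n+1)) (r : G) => ((Phi W (Fin.cons r⁻¹ (dface i x)) ^ ((-1:ℤ)^((i:ℕ)+1+1)) : Aˣ) : A)) i t)
        = ((∏ i : Fin (n+1), Phi W (Fin.cons t⁻¹ (dface i x)) ^ ((-1:ℤ)^((i:ℕ)+1+1)) : Aˣ) : A) := by
      rw [uval_prod]
    rw [hvs]
    have hfin : (((Phi W (Fin.cons (x0⁻¹ * t)⁻¹ (Fin.tail x)))⁻¹ : Aˣ) : A) *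
        (((∏ i : Fin (n+1), Phi W (Fin.cons t⁻¹ (dface i x)) ^ ((-1:ℤ)^((i:ℕ)+1+1)) : Aˣ) : A) *
          (((Phi W (Fin.cons t⁻¹ (Fin.init x)) ^ ((-1:ℤ)^(n+1+1+1)) : Aˣ) : A) * f t)) = f t := by
      have h1 : (((Phi W (Fin.cons (x0⁻¹ * t)⁻¹ (Fin.tail x)))⁻¹ : Aˣ) : A) *
          (((∏ i : Fin (n+1), Phi W (Fin.cons t⁻¹ (dface i x)) ^ ((-1:ℤ)^((i:ℕ)+1+1)) : Aˣ) : A) *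
            (((Phi W (Fin.cons t⁻¹ (Fin.init x)) ^ ((-1:ℤ)^(n+1+1+1)) : Aˣ) : A) * f t))
          = (((Phi W (Fin.cons (x0⁻¹ * t)⁻¹ (Fin.tail x)))⁻¹ * ((∏ i : Fin (n+1), Phi W (Fin.cons t⁻¹ (dface i x)) ^ ((-1:ℤ)^((i:ℕ)+1+1))) * Phi W (Fin.cons t⁻¹ (Fin.init x)) ^ ((-1:ℤ)^(n+1+1+1))) : Aˣ) : A) * f t := by
        rw [Units.val_mul, Units.val_mul]
        ring
      rw [h1, hunit1, Units.val_one, one_mul]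
    exact hfin
  · -- Globalizes
    intro x
    funext t
    show (((Phi W (Fin.cons t⁻¹ x))⁻¹ : Aˣ) : A) * S.emb (S.pe x) t = S.emb (w x) t
    rw [hb x]
    show _ = S.act t⁻¹ (S.e t * (S.pe x * wt x))
    rw [theta2 t (S.pe x) (wt x)]
    have hbb := hB1 t⁻¹ x
    rw [inv_inv] at hbb
    rw [hbb]
    have hax := habs2 t (S.pe x)
    show (((Phi W (Fin.cons t⁻¹ x))⁻¹ : Aˣ) : A) * S.act t⁻¹ (S.e t * S.pe x) = _
    linear_combination (-(((Phi W (Fin.cons t⁻¹ x))⁻¹ : Aˣ) : A)) * hax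

end UPA

end AUX

/-- (Theorem 2.3 of the paper, for `n = N + 1 ≥ 1`.)  Let `α` be a unital partial action of
`G` on the commutative unital ring `A` and `w ∈ Zⁿ(G, A)` a partial `n`-cocycle (with a
chosen ideal-inverse `winv`).  Then `w` is globalizable (i.e. admits a globalization
`u ∈ Zⁿ(G, U(M(B)))` for the enveloping action) if and only if there is a function
`w̃ : Gⁿ → U(A)` such that for all `x₁,…,x_{n+1}`:
(a) `α_{x₁}(1_{x₁⁻¹} w̃(x₂,…,x_{n+1})) ∏ᵢ w̃(x₁,…,xᵢxᵢ₊₁,…)^{(-1)ᶦ} w̃(x₁,…,xₙ)^{(-1)^{n+1}}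
     = 1_{x₁}`, and
(b) `w(x₁,…,xₙ) = 1_{(x₁,…,xₙ)} w̃(x₁,…,xₙ)`. -/
theorem stmt11 (S : UPA G A) (n : ℕ) (w winv : (Fin (n + 1) → G) → A)
    (hw : S.IsCocyclePair w winv) :
    (∃ u uinv : (Fin (n + 1) → G) → (G → A) → (G → A),
      S.GCocyclePair u uinv ∧ S.Globalizes u w) ↔
    ∃ wt wtinv : (Fin (n + 1) → G) → A,
      (∀ x, wt x * wtinv x = 1) ∧
      (∀ x : Fin (n + 2) → G,
        S.act (x 0) (S.e (x 0)⁻¹ * wt (Fin.tail x)) *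
          (∏ i : Fin (n + 1), psel wt wtinv ((i : ℕ) + 1) (dface i x)) *
          psel wt wtinv (n + 2) (Fin.init x) = S.e (x 0)) ∧
      (∀ x, w x = S.pe x * wt x) := by
  constructor
  · rintro ⟨u, uinv, hgc, hglob⟩
    exact S.forward w winv u uinv hgc hglob
  · rintro ⟨wt, wtinv, hunit, hA, hB⟩
    exact S.backward w wt wtinv hunit hA hB
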